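/- Let p be a prime and G a transitive subgroup of S_p. Then G has a unique minimal normal subgroup T, T is simple and acts transitively on the p points, and G/T is cyclic of order dividing p−1; equivalently G = T ⋊ B with B ≤ C_{p−1}. -/

import Mathlib

open MulAction Subgroup Pointwise

set_option linter.unusedSectionVars false

section Aux

variable {Q : Type*} [Group Q] {X : Type*} [Fintype X] [MulAction Q X]

private lemma aux_pretrans_of_orbit_univ {K : Subgroup Q} {x : X}
    (h : MulAction.orbit K x = Set.univ) : MulAction.IsPretransitive K X := by
  constructor
  intro a b
  have ha : a ∈ MulAction.orbit K x := h ▸ Set.mem_univ a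
  have hb : b ∈ MulAction.orbit K x := h ▸ Set.mem_univ b
  obtain ⟨k1, hk1⟩ := MulAction.mem_orbit_iff.mp ha
  obtain ⟨k2, hk2⟩ := MulAction.mem_orbit_iff.mp hb
  refine ⟨k2 * k1⁻¹, ?_⟩
  rw [mul_smul, ← hk1, inv_smul_smul, hk2]

private lemma aux_fix_all {K : Subgroup Q} [MulAction.IsPretransitive K X] {g : Q}
    (hg : ∀ k ∈ K, Commute g k) {x : X} (hx : g • x = x) (y : X) : g • y = y := by
  obtain ⟨k, hk⟩ := MulAction.exists_smul_eq K x y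
  rw [Subgroup.smul_def] at hk
  calc g • y = g • ((k : Q) • x) := by rw [hk]
    _ = (g * (k : Q)) • x := (mul_smul _ _ _).symm
    _ = ((k : Q) * g) • x := by rw [hg (k : Q) k.2]
    _ = (k : Q) • (g • x) := mul_smul _ _ _
    _ = (k : Q) • x := by rw [hx]
    _ = y := hk

private lemma aux_eq_one [FaithfulSMul Q X] {K : Subgroup Q} [MulAction.IsPretransitive K X]
    {g : Q} (hg : ∀ k ∈ K, Commute g k) {x : X} (hx : g • x = x) : g = 1 :=
  FaithfulSMul.eq_of_smul_eq_smul fun y => by rw [aux_fix_all hg hx y, one_smul]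

private lemma aux_centralizer_le [FaithfulSMul Q X] [Nonempty X] {K : Subgroup Q}
    [MulAction.IsPretransitive K X] (hab : ∀ a ∈ K, ∀ b ∈ K, Commute a b) :
    Subgroup.centralizer (K : Set Q) ≤ K := by
  intro g hg
  have hg' : ∀ k ∈ K, Commute g k := fun k hk =>
    Eq.symm (Subgroup.mem_centralizer_iff.mp hg k hk)
  have x₀ : X := Classical.arbitrary X
  obtain ⟨k, hk⟩ := MulAction.exists_smul_eq K x₀ (g • x₀)
  rw [Subgroup.smul_def] at hk
  have hd : ((k : Q))⁻¹ * g = 1 := by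
    apply aux_eq_one (K := K) (x := x₀)
    · intro m hm
      exact Commute.mul_left (hab _ (K.inv_mem k.2) _ hm) (hg' m hm)
    · rw [mul_smul, ← hk, inv_smul_smul]
  have : (k : Q) = g := inv_mul_eq_one.mp hd
  exact this ▸ k.2

private lemma aux_exists_moved [FaithfulSMul Q X] {N : Subgroup Q} (hN : N ≠ ⊥) :
    ∃ (n : N) (x : X), (n : Q) • x ≠ x := by
  obtain ⟨n, hn⟩ := Subgroup.ne_bot_iff_exists_ne_one.mp hN
  refine ⟨n, ?_⟩
  by_contra h
  push_neg at h
  have : (n : Q) = 1 := FaithfulSMul.eq_of_smul_eq_smul fun y => by rw [h y, one_smul]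
  exact hn (Subtype.ext (by simpa using this))

private lemma aux_orbit_univ {p : ℕ} (hp : p.Prime) (hX : Nat.card X = p) {K : Subgroup Q}
    {x : X} (hdvd : (MulAction.orbit K x).ncard ∣ p) {n : K} (hmove : (n : Q) • x ≠ x) :
    MulAction.orbit K x = Set.univ := by
  have hxmem : x ∈ MulAction.orbit K x := MulAction.mem_orbit_self x
  have hnmem : (n : Q) • x ∈ MulAction.orbit K x := by
    rw [← Subgroup.smul_def]; exact MulAction.mem_orbit x n
  have h2 : 1 < (MulAction.orbit K x).ncard := by
    rw [Set.one_lt_ncard_iff (Set.toFinite _)]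
    exact ⟨(n : Q) • x, x, hnmem, hxmem, hmove⟩
  rcases hp.eq_one_or_self_of_dvd _ hdvd with h1 | hP
  · omega
  · apply Set.eq_of_subset_of_ncard_le (Set.subset_univ _)
    rw [Set.ncard_univ, hX, ← hP]

private lemma aux_orbit_card_dvd (K : Subgroup Q) (x : X) :
    (MulAction.orbit K x).ncard ∣ Nat.card K := by
  rw [← Nat.card_coe_set_eq,
    Nat.card_congr (MulAction.orbitEquivQuotientStabilizer K x), ← Subgroup.index_eq_card]
  exact Subgroup.index_dvd_card _

private lemma aux_normal_pretrans {p : ℕ} (hp : p.Prime) (hX : Nat.card X = p)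
    [FaithfulSMul Q X] [MulAction.IsPretransitive Q X] {N : Subgroup Q} (nN : N.Normal)
    (hN : N ≠ ⊥) : MulAction.IsPretransitive N X := by
  haveI := nN
  obtain ⟨n, x, hmove⟩ := aux_exists_moved (X := X) hN
  have hb : MulAction.IsBlock Q (MulAction.orbit N x) := MulAction.IsBlock.orbit_of_normal x
  have hdvd := hb.ncard_dvd_card ⟨x, MulAction.mem_orbit_self x⟩
  rw [hX] at hdvd
  exact aux_pretrans_of_orbit_univ (aux_orbit_univ hp hX hdvd hmove)

private lemma aux_card_pretrans {p : ℕ} (hp : p.Prime) (hX : Nat.card X = p)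
    [FaithfulSMul Q X] {K : Subgroup Q} (hK : Nat.card K = p) :
    MulAction.IsPretransitive K X := by
  have hKbot : K ≠ ⊥ := by
    intro h
    rw [h, Subgroup.card_bot] at hK
    exact hp.one_lt.ne hK
  obtain ⟨n, x, hmove⟩ := aux_exists_moved (X := X) hKbot
  have hdvd := aux_orbit_card_dvd K x
  rw [hK] at hdvd
  exact aux_pretrans_of_orbit_univ (aux_orbit_univ hp hX hdvd hmove)

private lemma aux_dvd_card_of_pretrans {K : Subgroup Q} [MulAction.IsPretransitive K X]
    [Nonempty X] : Nat.card X ∣ Nat.card K := by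
  have x : X := Classical.arbitrary X
  have := aux_orbit_card_dvd K x
  rwa [MulAction.orbit_eq_univ, Set.ncard_univ] at this

private lemma aux_card_eq {p : ℕ} (hX : Nat.card X = p) [FaithfulSMul Q X] {T N : Subgroup Q}
    [MulAction.IsPretransitive T X] [MulAction.IsPretransitive N X] [Nonempty X]
    (hc : ∀ t ∈ T, ∀ n ∈ N, Commute t n) : Nat.card T = p := by
  have x₀ : X := Classical.arbitrary X
  rw [← hX]
  apply Nat.card_eq_of_bijective (fun t : T => (t : Q) • x₀)
  constructor
  · intro t1 t2 h
    have h' : (t1 : Q) • x₀ = (t2 : Q) • x₀ := h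
    have hd : ((t2 : Q))⁻¹ * (t1 : Q) = 1 := by
      apply aux_eq_one (K := N) (x := x₀)
      · intro k hk
        exact Commute.mul_left (Commute.inv_left (hc _ t2.2 _ hk)) (hc _ t1.2 _ hk)
      · rw [mul_smul, h', inv_smul_smul]
    exact (Subtype.ext (inv_mul_eq_one.mp hd)).symm
  · intro y
    obtain ⟨t, ht⟩ := MulAction.exists_smul_eq T x₀ y
    exact ⟨t, ht⟩

private lemma aux_comm_of_cyclic {K : Subgroup Q} (h : IsCyclic K) :
    ∀ a ∈ K, ∀ b ∈ K, Commute a b := by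
  intro a ha b hb
  obtain ⟨g, hgen⟩ := h.exists_generator
  obtain ⟨m, hm⟩ := hgen ⟨a, ha⟩
  obtain ⟨n, hn⟩ := hgen ⟨b, hb⟩
  have key : (⟨a, ha⟩ : K) * ⟨b, hb⟩ = ⟨b, hb⟩ * ⟨a, ha⟩ := by
    rw [← hm, ← hn, ← zpow_add, ← zpow_add, add_comm]
  have := Subtype.ext_iff.mp key
  exact (by simpa using this : a * b = b * a)

private lemma aux_unique_min {p : ℕ} (hp : p.Prime) (hX : Nat.card X = p) [FaithfulSMul Q X]
    [MulAction.IsPretransitive Q X] :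
    ∃ T : Subgroup Q, T.Normal ∧ T ≠ ⊥ ∧ ∀ N : Subgroup Q, N.Normal → N ≠ ⊥ → T ≤ N := by
  haveI : Nonempty X := by
    have : 0 < Nat.card X := hX ▸ hp.pos
    exact (Nat.card_pos_iff.mp this).1
  haveI : Finite Q := Finite.of_injective (MulAction.toPerm : Q → Equiv.Perm X)
    MulAction.toPerm_injective
  haveI : Finite (Subgroup Q) :=
    Finite.of_injective (fun H : Subgroup Q => (H : Set Q)) SetLike.coe_injective
  have hQ : (⊤ : Subgroup Q) ≠ ⊥ := by
    have h2 : 1 < Nat.card X := hX ▸ hp.one_lt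
    haveI : Nontrivial X := Finite.one_lt_card_iff_nontrivial.mp h2
    obtain ⟨x, y, hxy⟩ := exists_pair_ne X
    obtain ⟨g, hg⟩ := MulAction.exists_smul_eq Q x y
    rw [Subgroup.ne_bot_iff_exists_ne_one]
    refine ⟨⟨g, Subgroup.mem_top g⟩, ?_⟩
    intro h
    have : g = 1 := by simpa [Subtype.ext_iff] using h
    exact hxy (by rw [← hg, this, one_smul])
  set S : Set (Subgroup Q) := {N | N.Normal ∧ N ≠ ⊥} with hS
  have hSne : S.Nonempty := ⟨⊤, ⟨inferInstance, hQ⟩⟩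
  obtain ⟨T, hTS, hTmin⟩ : ∃ T ∈ S, ∀ N ∈ S, N ≤ T → T = N := ((Set.toFinite S).exists_minimal hSne).imp fun T h =>
    ⟨h.1, fun N hN hle => le_antisymm (h.2 hN hle) hle⟩
  obtain ⟨hTn, hTbot⟩ := hTS
  refine ⟨T, hTn, hTbot, ?_⟩
  intro N nN hNbot
  haveI := hTn; haveI := nN
  by_cases h0 : T ⊓ N = ⊥
  · exfalso
    haveI : MulAction.IsPretransitive N X := aux_normal_pretrans hp hX nN hNbot
    haveI : MulAction.IsPretransitive T X := aux_normal_pretrans hp hX hTn hTbot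
    have hcomm : ∀ t ∈ T, ∀ n ∈ N, Commute t n := fun t ht n hn =>
      Subgroup.commute_of_normal_of_disjoint T N hTn nN (disjoint_iff.mpr h0) t n ht hn
    have hcard : Nat.card T = p := aux_card_eq hX hcomm
    haveI : Fact p.Prime := ⟨hp⟩
    have hcyc : IsCyclic T := isCyclic_of_prime_card hcard
    have hab : ∀ a ∈ T, ∀ b ∈ T, Commute a b := aux_comm_of_cyclic hcyc
    have hNle : N ≤ T := by
      refine le_trans ?_ (aux_centralizer_le (X := X) (K := T) hab)
      intro n hn
      exact Subgroup.mem_centralizer_iff.mpr fun t ht => hcomm t ht n hn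
    exact hNbot ((inf_eq_right.mpr hNle) ▸ h0)
  · have hinfN : (T ⊓ N).Normal := by
      constructor
      intro x hx g
      rw [Subgroup.mem_inf] at hx ⊢
      exact ⟨hTn.conj_mem x hx.1 g, nN.conj_mem x hx.2 g⟩
    have hmem : (T ⊓ N) ∈ S := ⟨hinfN, h0⟩
    have heq := hTmin (T ⊓ N) hmem inf_le_left
    exact le_trans (le_of_eq heq) inf_le_right

end Aux

/-- `MulAut` of `Multiplicative A` is the same as `AddAut A`. -/
private def mulAutMultiplicative (A : Type*) [AddGroup A] :
    MulAut (Multiplicative A) ≃* Multiplicative (AddAut A) :=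
  MulAutMultiplicative A

private lemma aux_isCyclic_of_injective {H C : Type*} [Group H] [Group C] [IsCyclic C]
    (f : H →* C) (hf : Function.Injective f) : IsCyclic H :=
  isCyclic_of_surjective (MonoidHom.ofInjective hf).symm.toMonoidHom
    (MonoidHom.ofInjective hf).symm.surjective

private theorem aux_main {p : ℕ} (hp : p.Prime) {Q X : Type*} [Group Q] [Fintype X]
    [MulAction Q X] [FaithfulSMul Q X] [MulAction.IsPretransitive Q X]
    (hX : Nat.card X = p) :
    ∃ (T : Subgroup Q) (hT : T.Normal),
      T ≠ ⊥ ∧ (∀ N : Subgroup Q, N.Normal → N ≠ ⊥ → T ≤ N) ∧ IsSimpleGroup T ∧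
      MulAction.IsPretransitive T X ∧
      (letI := hT; IsCyclic (Q ⧸ T) ∧ Nat.card (Q ⧸ T) ∣ (p - 1)) := by
  haveI : Fact p.Prime := ⟨hp⟩
  haveI : Nonempty X := by
    have : 0 < Nat.card X := hX ▸ hp.pos
    exact (Nat.card_pos_iff.mp this).1
  haveI : Finite Q := Finite.of_injective (MulAction.toPerm : Q → Equiv.Perm X)
    MulAction.toPerm_injective
  obtain ⟨T, hTn, hTbot, hTmin⟩ := aux_unique_min (Q := Q) (X := X) hp hX
  haveI := hTn
  haveI hTtrans : MulAction.IsPretransitive T X := aux_normal_pretrans hp hX hTn hTbot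
  -- unique minimal normal subgroup of T
  obtain ⟨M, hMn, hMbot, hMmin⟩ := aux_unique_min (Q := ↥T) (X := X) hp hX
  haveI := hMn
  have key : ∀ h : Q, M ≤ Subgroup.map (MulAut.conjNormal h).toMonoidHom M := by
    intro h
    apply hMmin
    · exact hMn.map _ (MulEquiv.surjective _)
    · intro hbot
      apply hMbot
      apply Subgroup.map_injective (f := (MulAut.conjNormal h).toMonoidHom)
        (MulAut.conjNormal h).injective
      rw [hbot, Subgroup.map_bot]
  have key2 : ∀ (g : Q) (m : T), m ∈ M → (MulAut.conjNormal g) m ∈ M := by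
    intro g m hm
    obtain ⟨m', hm', hEq⟩ := Subgroup.mem_map.mp ((key g⁻¹) hm)
    have : (MulAut.conjNormal g) m = m' := by
      rw [← hEq]
      show (MulAut.conjNormal g) ((MulAut.conjNormal g⁻¹) m') = m'
      rw [← MulAut.mul_apply, ← map_mul, mul_inv_cancel, map_one, MulAut.one_apply]
    rw [this]
    exact hm'
  set M' : Subgroup Q := Subgroup.map T.subtype M with hM'def
  have hM'n : M'.Normal := by
    constructor
    intro x hx g
    obtain ⟨m, hm, rfl⟩ := Subgroup.mem_map.mp hx
    have hcoe : g * (T.subtype m) * g⁻¹ = T.subtype ((MulAut.conjNormal g) m) :=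
      (MulAut.conjNormal_apply g m).symm
    rw [hcoe]
    exact Subgroup.mem_map.mpr ⟨_, key2 g m hm, rfl⟩
  have hM'bot : M' ≠ ⊥ := by
    intro h
    apply hMbot
    apply Subgroup.map_injective (Subgroup.subtype_injective T)
    rw [Subgroup.map_bot, ← hM'def]
    exact h
  have hM'T : M' = T := le_antisymm (Subgroup.map_subtype_le M) (hTmin M' hM'n hM'bot)
  have hMtop : M = ⊤ := by
    apply Subgroup.map_injective (Subgroup.subtype_injective T)
    rw [← MonoidHom.range_eq_map, Subgroup.range_subtype, ← hM'def]
    exact hM'T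
  have hsimple : IsSimpleGroup T := by
    haveI : Nontrivial T := (Subgroup.nontrivial_iff_ne_bot T).mpr hTbot
    constructor
    intro H hHn
    by_cases hb : H = ⊥
    · exact Or.inl hb
    · right
      rw [eq_top_iff, ← hMtop]
      exact hMmin H hHn hb
  -- the quotient
  have hpermcard : Nat.card (Equiv.Perm X) = Nat.factorial p := by
    classical
    rw [Nat.card_eq_fintype_card, Fintype.card_perm, ← hX, Nat.card_eq_fintype_card]
  have hQdvd : Nat.card Q ∣ p.factorial := by
    rw [← hpermcard]
    exact Subgroup.card_dvd_of_injective (MulAction.toPermHom Q X)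
      (MulAction.toPerm_injective)
  have hTdvd : Nat.card T ∣ p.factorial :=
    dvd_trans (Subgroup.card_subgroup_dvd_card T) hQdvd
  have hpT : p ∣ Nat.card T := hX ▸ aux_dvd_card_of_pretrans (K := T)
  have hp2 : ¬ (p * p ∣ Nat.card T) := by
    intro h
    have h2 : p * p ∣ p.factorial := h.trans hTdvd
    rw [← Nat.mul_factorial_pred hp.ne_zero] at h2
    have h3 := (Nat.mul_dvd_mul_iff_left hp.pos).mp h2
    have h4 := (Nat.Prime.dvd_factorial hp).mp h3
    have := hp.two_le
    omega
  have hne : Nat.card T ≠ 0 := Nat.card_pos.ne'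
  have hfac : (Nat.card T).factorization p = 1 := by
    have h1 : 1 ≤ (Nat.card T).factorization p := by
      rw [← Nat.Prime.pow_dvd_iff_le_factorization hp hne, pow_one]
      exact hpT
    have h2 : ¬ 2 ≤ (Nat.card T).factorization p := by
      rw [← Nat.Prime.pow_dvd_iff_le_factorization hp hne, pow_two]
      exact hp2
    omega
  obtain ⟨P⟩ := (inferInstance : Nonempty (Sylow p T))
  have hPcard : Nat.card (P : Subgroup T) = p := by
    rw [Sylow.card_eq_multiplicity, hfac, pow_one]
  set P' : Subgroup Q := Subgroup.map T.subtype (P : Subgroup T) with hP'def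
  have hP'card : Nat.card P' = p := by
    rw [← hPcard]
    exact (Nat.card_congr
      (Subgroup.equivMapOfInjective _ _ (Subgroup.subtype_injective T)).toEquiv).symm
  have hP'T : P' ≤ T := Subgroup.map_subtype_le _
  haveI : MulAction.IsPretransitive P' X := aux_card_pretrans hp hX hP'card
  have hP'cyc : IsCyclic P' := isCyclic_of_prime_card hP'card
  have hcentP' : Subgroup.centralizer (P' : Set Q) ≤ T :=
    le_trans (aux_centralizer_le (X := X) (aux_comm_of_cyclic hP'cyc)) hP'T
  have hfr : Subgroup.normalizer (P' : Set Q) ⊔ T = ⊤ := Sylow.normalizer_sup_eq_top P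
  set Np := Subgroup.normalizer (P' : Set Q) with hNp
  set ψ : Np →* Q ⧸ T := (QuotientGroup.mk' T).comp Np.subtype with hψdef
  have hψsurj : Function.Surjective ψ := by
    intro qbar
    obtain ⟨q, rfl⟩ := QuotientGroup.mk'_surjective T qbar
    have hq : q ∈ (Np : Set Q) * (T : Set Q) := by
      rw [← Subgroup.mul_normal]
      rw [hfr]
      trivial
    obtain ⟨n, hn, t, ht, rfl⟩ := hq
    refine ⟨⟨n, hn⟩, ?_⟩
    show QuotientGroup.mk' T n = QuotientGroup.mk' T (n * t)
    rw [QuotientGroup.mk'_eq_mk']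
    exact ⟨t, ht, rfl⟩
  set φ := P'.normalizerMonoidHom with hφdef
  have hker : φ.ker ≤ ψ.ker := by
    rw [hφdef, Subgroup.normalizerMonoidHom_ker]
    intro x hx
    have hxT : (x : Q) ∈ T := hcentP' (Subgroup.mem_subgroupOf.mp hx)
    rw [MonoidHom.mem_ker]
    exact (QuotientGroup.eq_one_iff _).mpr hxT
  haveI : Finite (MulAut P') :=
    Finite.of_injective MulEquiv.toEquiv MulEquiv.toEquiv_injective
  have hMAiso : MulAut ↥P' ≃* (ZMod p)ˣ := by
    have e1 : Multiplicative (ZMod p) ≃* ↥P' := by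
      exact (ZMod.ringEquivCongr hP'card.symm).toAddEquiv.toMultiplicative.trans
        (zmodCyclicMulEquiv hP'cyc)
    exact ((MulAut.congr e1).symm.trans (mulAutMultiplicative (ZMod p))).trans
      (ZMod.AddAutEquivUnits p).toMultiplicative
  haveI : IsCyclic (MulAut ↥P') := aux_isCyclic_of_injective hMAiso.toMonoidHom hMAiso.injective
  have hMAcard : Nat.card (MulAut ↥P') = p - 1 := by
    haveI := hP'cyc
    rw [IsCyclic.card_mulAut, hP'card, Nat.totient_prime hp]
  set f2 : (Np ⧸ φ.ker) →* (Np ⧸ ψ.ker) :=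
    QuotientGroup.map _ _ (MonoidHom.id _) (by rwa [Subgroup.comap_id]) with hf2def
  have hf2surj : Function.Surjective f2 := by
    intro x
    induction x using QuotientGroup.induction_on with
    | H z => exact ⟨QuotientGroup.mk z, by rw [hf2def, QuotientGroup.map_mk]; rfl⟩
  have e3 : (Np ⧸ ψ.ker) ≃* (Q ⧸ T) := QuotientGroup.quotientKerEquivOfSurjective ψ hψsurj
  haveI : IsCyclic (Np ⧸ φ.ker) :=
    aux_isCyclic_of_injective (QuotientGroup.kerLift φ) (QuotientGroup.kerLift_injective φ)
  have hcyclic : IsCyclic (Q ⧸ T) :=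
    isCyclic_of_surjective (e3.toMonoidHom.comp f2) (e3.surjective.comp hf2surj)
  have hdvd : Nat.card (Q ⧸ T) ∣ (p - 1) := by
    have h1 : Nat.card (Q ⧸ T) = Nat.card (Np ⧸ ψ.ker) := Nat.card_congr e3.toEquiv.symm
    have h2 : Nat.card (Np ⧸ ψ.ker) ∣ Nat.card (Np ⧸ φ.ker) :=
      Subgroup.card_dvd_of_surjective f2 hf2surj
    have h3 : Nat.card (Np ⧸ φ.ker) ∣ Nat.card (MulAut ↥P') :=
      Subgroup.card_dvd_of_injective (QuotientGroup.kerLift φ)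
        (QuotientGroup.kerLift_injective φ)
    rw [h1, ← hMAcard]
    exact h2.trans h3
  exact ⟨T, hTn, hTbot, hTmin, hsimple, hTtrans, hcyclic, hdvd⟩

theorem transitive_group_of_prime_degree_structure (p : ℕ) (hp : p.Prime)
    (G : Subgroup (Equiv.Perm (Fin p)))
    (htrans : ∀ x y : Fin p, ∃ g ∈ G, g x = y) :
    ∃ (T : Subgroup G) (hT : T.Normal),
      T ≠ ⊥ ∧
      (∀ N : Subgroup G, N.Normal → N ≠ ⊥ → T ≤ N) ∧
      IsSimpleGroup T ∧
      (∀ x y : Fin p, ∃ t ∈ T, ((t : G) : Equiv.Perm (Fin p)) x = y) ∧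
      (letI := hT
       IsCyclic (G ⧸ T) ∧ Nat.card (G ⧸ T) ∣ (p - 1)) := by
  haveI : MulAction.IsPretransitive G (Fin p) := by
    constructor
    intro x y
    obtain ⟨g, hg, hgx⟩ := htrans x y
    exact ⟨⟨g, hg⟩, hgx⟩
  have hX : Nat.card (Fin p) = p := by simp
  obtain ⟨T, hTn, h1, h2, h3, h4, h5⟩ := aux_main hp (Q := G) (X := Fin p) hX
  refine ⟨T, hTn, h1, h2, h3, ?_, h5⟩
  intro x y
  haveI := h4
  obtain ⟨t, ht⟩ := MulAction.exists_smul_eq T x y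
  exact ⟨(t : G), t.2, ht⟩
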